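/- Entropy inequality for reservoir-assisted feedback (Eq. (55) of the paper): Let ρ_W be a density matrix on ℂ^{d_W}, φ ∈ ℂ^{d_S} a unit vector, τ a density matrix on ℂ^{d_R}, and U a unitary on ℂ^{d_W} ⊗ ℂ^{d_S} ⊗ ℂ^{d_R}. Let σ := U(ρ_W ⊗ |φ⟩⟨φ| ⊗ τ)U†, with marginals σ_W, σ_S, σ_R (partial traces over the other two factors). Then S(σ_R) − S(τ) ≥ S(ρ_W) − S(σ_W) − S(σ_S). -/

import Mathlib

open Matrix
open scoped Kronecker Matrix ComplexOrder
open Polynomial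
set_option linter.unusedSectionVars false
set_option maxHeartbeats 1000000

noncomputable section

/-- A density matrix: positive semidefinite with unit trace. -/
def IsDensityMatrix {n : Type*} [Fintype n] (ρ : Matrix n n ℂ) : Prop :=
  ρ.PosSemidef ∧ ρ.trace = 1

/-- von Neumann entropy `S(ρ) = -∑ λᵢ log λᵢ` (junk value 0 if not Hermitian). -/
noncomputable def vnEntropy {n : Type*} [Fintype n] [DecidableEq n]
    (ρ : Matrix n n ℂ) : ℝ :=
  if h : ρ.IsHermitian then -∑ i, (h.eigenvalues i) * Real.log (h.eigenvalues i) else 0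

/-- Non-equilibrium free energy `F(ρ) = tr(Hρ) - kT S(ρ)`. -/
noncomputable def freeEnergy {n : Type*} [Fintype n] [DecidableEq n]
    (kT : ℝ) (H ρ : Matrix n n ℂ) : ℝ :=
  (Matrix.trace (H * ρ)).re - kT * vnEntropy ρ

/-- Least eigenvalue of a Hermitian matrix (junk value 0 if not Hermitian). -/
noncomputable def lambdaMin {n : Type*} [Fintype n] [DecidableEq n]
    (H : Matrix n n ℂ) : ℝ :=
  if h : H.IsHermitian then ⨅ i, h.eigenvalues i else 0

/-- Partial trace over the second tensor factor. -/
def ptrace2 {m n : Type*} [Fintype n]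
    (σ : Matrix (m × n) (m × n) ℂ) : Matrix m m ℂ :=
  fun i j => ∑ k, σ (i, k) (j, k)

/-- Partial trace over the first tensor factor. -/
def ptrace1 {m n : Type*} [Fintype m]
    (σ : Matrix (m × n) (m × n) ℂ) : Matrix n n ℂ :=
  fun k l => ∑ i, σ (i, k) (i, l)

/-- Outer product `|v⟩⟨v|`. -/
def outer {n : Type*} (v : n → ℂ) : Matrix n n ℂ :=
  Matrix.vecMulVec v (star v)

/-- Kronecker product of vectors. -/
def kronVec {m n : Type*} (v : m → ℂ) (w : n → ℂ) : m × n → ℂ :=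
  fun p => v p.1 * w p.2

namespace EntAux

section CP
variable {n : Type*} [Fintype n] [DecidableEq n]




lemma charpoly_conj (U A : Matrix n n ℂ) (hU : U ∈ Matrix.unitaryGroup n ℂ) :
    (U * A * Uᴴ).charpoly = A.charpoly := by
  have hUU : U * Uᴴ = 1 := Matrix.mem_unitaryGroup_iff.mp hU
  have hmap1 : (U.map (C : ℂ → ℂ[X])) * (Uᴴ.map C) = 1 := by
    rw [← Matrix.map_mul, hUU]; simp
  unfold Matrix.charpoly
  have h1 : charmatrix (U * A * Uᴴ) =
      (U.map C) * charmatrix A * (Uᴴ.map C) := by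
    have hmul : ((U * A * Uᴴ).map (C : ℂ → ℂ[X]))
        = (U.map C) * (A.map C) * (Uᴴ.map C) := by
      rw [Matrix.map_mul, Matrix.map_mul]
    have hscal : (U.map (C : ℂ → ℂ[X])) * (Matrix.scalar n (X : ℂ[X])) * (Uᴴ.map C)
        = Matrix.scalar n (X : ℂ[X]) := by
      rw [Matrix.scalar_apply, ← Matrix.smul_one_eq_diagonal, mul_smul_comm, smul_mul_assoc,
        mul_one, hmap1, Matrix.smul_one_eq_diagonal]
    simp only [charmatrix, RingHom.mapMatrix_apply]
    rw [Matrix.mul_sub, Matrix.sub_mul, hscal, hmul]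
  rw [h1, det_mul, det_mul, mul_right_comm, ← det_mul, hmap1, det_one, one_mul]

lemma charpoly_diagonal (d : n → ℂ) :
    (Matrix.diagonal d).charpoly = ∏ i, (X - C (d i)) := by
  unfold Matrix.charpoly
  have : charmatrix (Matrix.diagonal d) = Matrix.diagonal (fun i => X - C (d i)) := by
    ext i j
    by_cases h : i = j
    · subst h; simp
    · simp [h, Matrix.diagonal_apply_ne _ h]
  rw [this, det_diagonal]

lemma eig_multiset {A : Matrix n n ℂ} (hA : A.IsHermitian)
    {V : Matrix n n ℂ} (hV : V ∈ Matrix.unitaryGroup n ℂ) (d : n → ℝ)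
    (hAVD : A = V * Matrix.diagonal (fun i => (d i : ℂ)) * Vᴴ) :
    Multiset.map hA.eigenvalues Finset.univ.val = Multiset.map d Finset.univ.val := by
  have h1 : A.charpoly = ∏ i, (X - C ((d i : ℂ))) := by
    rw [hAVD, charpoly_conj _ _ hV, charpoly_diagonal]
  have h2 : A.charpoly = ∏ i, (X - C ((hA.eigenvalues i : ℂ))) := by
    conv_lhs => rw [hA.spectral_theorem]
    rw [Unitary.conjStarAlgAut_apply, Matrix.star_eq_conjTranspose, charpoly_conj _ _ (hA.eigenvectorUnitary).2, charpoly_diagonal]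
    rfl
  have key : ∀ f : n → ℝ, (∏ i, (X - C ((f i : ℂ)))).roots
      = Multiset.map (fun i => (f i : ℂ)) Finset.univ.val := by
    intro f
    rw [Finset.prod_eq_multiset_prod]
    rw [show Multiset.map (fun i => X - C ((f i : ℂ))) Finset.univ.val
        = Multiset.map (fun a => X - C a) (Multiset.map (fun i => (f i : ℂ)) Finset.univ.val) by
      rw [Multiset.map_map]; rfl]
    exact roots_multiset_prod_X_sub_C _
  have h3 : Multiset.map (fun i => ((hA.eigenvalues i : ℝ) : ℂ)) Finset.univ.val
      = Multiset.map (fun i => ((d i : ℝ) : ℂ)) Finset.univ.val := by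
    rw [← key, ← key, ← h1, ← h2]
  apply Multiset.map_injective (f := (Complex.ofReal : ℝ → ℂ)) Complex.ofReal_injective
  rw [Multiset.map_map, Multiset.map_map]
  exact h3

lemma sum_g_eig {A : Matrix n n ℂ} (hA : A.IsHermitian)
    {V : Matrix n n ℂ} (hV : V ∈ Matrix.unitaryGroup n ℂ) (d : n → ℝ)
    (hAVD : A = V * Matrix.diagonal (fun i => (d i : ℂ)) * Vᴴ) (g : ℝ → ℝ) :
    ∑ i, g (hA.eigenvalues i) = ∑ i, g (d i) := by
  have h := eig_multiset hA hV d hAVD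
  have e1 : ∑ i, g (hA.eigenvalues i)
      = ((Multiset.map hA.eigenvalues Finset.univ.val).map g).sum := by
    rw [Multiset.map_map]; rfl
  have e2 : ∑ i, g (d i) = ((Multiset.map d Finset.univ.val).map g).sum := by
    rw [Multiset.map_map]; rfl
  rw [e1, e2, h]



end CP


/-- entropy integrand -/
def ent (x : ℝ) : ℝ := x * Real.log x

@[simp] lemma ent_zero : ent 0 = 0 := by simp [ent]

lemma ent_mul {x y : ℝ} (hx : 0 ≤ x) (hy : 0 ≤ y) :
    ent (x * y) = y * ent x + x * ent y := by
  rcases eq_or_lt_of_le hx with h | h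
  · simp [ent, ← h]
  rcases eq_or_lt_of_le hy with h' | h'
  · simp [ent, ← h']
  unfold ent
  rw [Real.log_mul (ne_of_gt h) (ne_of_gt h')]
  ring

lemma klein_term {p q P : ℝ} (hp : 0 ≤ p) (hq : 0 ≤ q) (hP : 0 ≤ P)
    (hsupp : q = 0 → p * P = 0) :
    p * P * Real.log q ≤ P * ent p + P * q - P * p := by
  rcases eq_or_lt_of_le hP with hP0 | hP0
  · simp [← hP0]
  rcases eq_or_lt_of_le hp with hp0 | hp0
  · simp only [← hp0, zero_mul, mul_zero, ent_zero, sub_zero, add_zero]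
    positivity
  have hq0 : 0 < q := by
    rcases eq_or_lt_of_le hq with h | h
    · exfalso
      have := hsupp h.symm
      nlinarith
    · exact h
  have hlog : Real.log (q / p) ≤ q / p - 1 := Real.log_le_sub_one_of_pos (by positivity)
  rw [Real.log_div (ne_of_gt hq0) (ne_of_gt hp0)] at hlog
  have key : p * Real.log q ≤ ent p + q - p := by
    unfold ent
    have := mul_le_mul_of_nonneg_left hlog hp
    rw [mul_sub] at this
    have hqp : p * (q / p) = q := by field_simp
    nlinarith
  nlinarith

lemma klein_sum {I : Type*} [Fintype I] (p q : I → ℝ) (P : I → I → ℝ)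
    (hp : ∀ i, 0 ≤ p i) (hq : ∀ j, 0 ≤ q j) (hP : ∀ i j, 0 ≤ P i j)
    (hrow : ∀ i, ∑ j, P i j = 1) (hcol : ∀ j, ∑ i, P i j = 1)
    (hqp : ∑ j, q j ≤ ∑ i, p i)
    (hsupp : ∀ i j, q j = 0 → p i * P i j = 0) :
    ∑ i, ∑ j, p i * P i j * Real.log (q j) ≤ ∑ i, ent (p i) := by
  have step : ∑ i, ∑ j, p i * P i j * Real.log (q j)
      ≤ ∑ i, ∑ j, (P i j * ent (p i) + P i j * q j - P i j * p i) :=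
    Finset.sum_le_sum fun i _ => Finset.sum_le_sum fun j _ =>
      klein_term (hp i) (hq j) (hP i j) (hsupp i j)
  refine step.trans ?_
  have eA : ∀ i, ∑ j, P i j * ent (p i) = ent (p i) := by
    intro i; rw [← Finset.sum_mul, hrow, one_mul]
  have eC : ∀ i, ∑ j, P i j * p i = p i := by
    intro i; rw [← Finset.sum_mul, hrow, one_mul]
  have eB : ∑ i, ∑ j, P i j * q j = ∑ j, q j := by
    rw [Finset.sum_comm]
    refine Finset.sum_congr rfl fun j _ => ?_
    rw [← Finset.sum_mul, hcol, one_mul]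
  simp only [Finset.sum_sub_distrib, Finset.sum_add_distrib, eA, eC]
  rw [eB]
  linarith



variable {m n : Type*} [Fintype m] [Fintype n]

lemma ptrace2_isHermitian {ρ : Matrix (m × n) (m × n) ℂ} (h : ρ.IsHermitian) :
    (ptrace2 ρ).IsHermitian := by
  ext i j
  simp only [conjTranspose_apply, ptrace2, star_sum]
  exact Finset.sum_congr rfl fun k _ => h.apply (i, k) (j, k)

lemma ptrace1_isHermitian {ρ : Matrix (m × n) (m × n) ℂ} (h : ρ.IsHermitian) :
    (ptrace1 ρ).IsHermitian := by
  ext i j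
  simp only [conjTranspose_apply, ptrace1, star_sum]
  exact Finset.sum_congr rfl fun k _ => h.apply (k, i) (k, j)

lemma ptrace2_trace (ρ : Matrix (m × n) (m × n) ℂ) :
    (ptrace2 ρ).trace = ρ.trace := by
  simp [Matrix.trace, ptrace2, Matrix.diag, Fintype.sum_prod_type]

lemma ptrace1_trace (ρ : Matrix (m × n) (m × n) ℂ) :
    (ptrace1 ρ).trace = ρ.trace := by
  rw [Matrix.trace, Matrix.trace, Fintype.sum_prod_type, Finset.sum_comm]
  simp [ptrace1, Matrix.diag]

lemma ptrace2_posSemidef [DecidableEq n] {ρ : Matrix (m × n) (m × n) ℂ} (h : ρ.PosSemidef) :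
    (ptrace2 ρ).PosSemidef := by
  refine Matrix.PosSemidef.of_dotProduct_mulVec_nonneg (ptrace2_isHermitian h.1) fun x => ?_
  set y : n → (m × n → ℂ) := fun k p => if p.2 = k then x p.1 else 0 with hy
  have hterm : ∀ k, star (y k) ⬝ᵥ (ρ *ᵥ y k)
      = ∑ i, ∑ j, star (x i) * (ρ (i, k) (j, k) * x j) := by
    intro k
    simp only [dotProduct, mulVec, hy, Fintype.sum_prod_type, Pi.star_apply,
      apply_ite (star : ℂ → ℂ), star_zero, ite_mul, mul_ite, zero_mul, mul_zero,
      Finset.sum_ite_eq', Finset.mem_univ, if_true, Finset.sum_ite_irrel, Finset.sum_const_zero,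
      Finset.mul_sum]
  have key : star x ⬝ᵥ (ptrace2 ρ *ᵥ x) = ∑ k, star (y k) ⬝ᵥ (ρ *ᵥ y k) := by
    have e : star x ⬝ᵥ (ptrace2 ρ *ᵥ x)
        = ∑ k, ∑ i, ∑ j, star (x i) * (ρ (i, k) (j, k) * x j) := by
      simp only [dotProduct, mulVec, ptrace2, Pi.star_apply, Finset.mul_sum, Finset.sum_mul]
      exact (Finset.sum_congr rfl fun j _ => Finset.sum_comm).trans Finset.sum_comm
    rw [e]
    exact Finset.sum_congr rfl fun k _ => (hterm k).symm
  rw [key]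
  exact Finset.sum_nonneg fun k _ => h.dotProduct_mulVec_nonneg _

lemma ptrace1_posSemidef [DecidableEq m] {ρ : Matrix (m × n) (m × n) ℂ} (h : ρ.PosSemidef) :
    (ptrace1 ρ).PosSemidef := by
  refine Matrix.PosSemidef.of_dotProduct_mulVec_nonneg (ptrace1_isHermitian h.1) fun x => ?_
  set y : m → (m × n → ℂ) := fun k p => if p.1 = k then x p.2 else 0 with hy
  have hterm : ∀ k, star (y k) ⬝ᵥ (ρ *ᵥ y k)
      = ∑ i, ∑ j, star (x i) * (ρ (k, i) (k, j) * x j) := by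
    intro k
    simp only [dotProduct, mulVec, hy, Fintype.sum_prod_type, Pi.star_apply,
      apply_ite (star : ℂ → ℂ), star_zero, ite_mul, mul_ite, zero_mul, mul_zero,
      Finset.sum_ite_eq', Finset.mem_univ, if_true, Finset.sum_ite_irrel, Finset.sum_const_zero,
      Finset.mul_sum]
  have key : star x ⬝ᵥ (ptrace1 ρ *ᵥ x) = ∑ k, star (y k) ⬝ᵥ (ρ *ᵥ y k) := by
    have e : star x ⬝ᵥ (ptrace1 ρ *ᵥ x)
        = ∑ k, ∑ i, ∑ j, star (x i) * (ρ (k, i) (k, j) * x j) := by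
      simp only [dotProduct, mulVec, ptrace1, Pi.star_apply, Finset.mul_sum, Finset.sum_mul]
      exact (Finset.sum_congr rfl fun j _ => Finset.sum_comm).trans Finset.sum_comm
    rw [e]
    exact Finset.sum_congr rfl fun k _ => (hterm k).symm
  rw [key]
  exact Finset.sum_nonneg fun k _ => h.dotProduct_mulVec_nonneg _



variable {m n : Type*} [Fintype m] [Fintype n] [DecidableEq m] [DecidableEq n]

lemma trace_kron_one (M : Matrix m m ℂ) (ρ : Matrix (m × n) (m × n) ℂ) :
    Matrix.trace ((M ⊗ₖ (1 : Matrix n n ℂ)) * ρ) = Matrix.trace (M * ptrace2 ρ) := by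
  simp only [Matrix.trace, Matrix.diag, mul_apply, kroneckerMap_apply, one_apply, ptrace2,
    Fintype.sum_prod_type, ite_mul, mul_ite, mul_zero, zero_mul, mul_one,
    Finset.sum_ite_eq, Finset.sum_ite_eq', Finset.mem_univ, if_true, Finset.mul_sum]
  exact Finset.sum_congr rfl fun x _ => Finset.sum_comm

lemma trace_one_kron (M : Matrix n n ℂ) (ρ : Matrix (m × n) (m × n) ℂ) :
    Matrix.trace (((1 : Matrix m m ℂ) ⊗ₖ M) * ρ) = Matrix.trace (M * ptrace1 ρ) := by
  simp only [Matrix.trace, Matrix.diag, mul_apply, kroneckerMap_apply, one_apply, ptrace1,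
    Fintype.sum_prod_type, ite_mul, mul_ite, mul_zero, zero_mul, mul_one,
    Finset.sum_ite_eq, Finset.sum_ite_eq', Finset.mem_univ, if_true, Finset.mul_sum,
    Finset.sum_ite_irrel, Finset.sum_const_zero, one_mul]
  exact Finset.sum_comm.trans (Finset.sum_congr rfl fun _ _ => Finset.sum_comm)

lemma trace_single_mul (a : m) (M : Matrix m m ℂ) :
    Matrix.trace (Matrix.single a a (1 : ℂ) * M) = M a a := by
  simp [Matrix.trace, Matrix.diag, mul_apply, Matrix.single, of_apply, ite_mul, one_mul, zero_mul,
    Finset.sum_ite_eq, Finset.sum_ite_eq', ite_and]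




lemma vnEntropy_eq {n : Type*} [Fintype n] [DecidableEq n] {A : Matrix n n ℂ}
    (hA : A.IsHermitian) : vnEntropy A = -∑ i, ent (hA.eigenvalues i) := by
  unfold vnEntropy
  rw [dif_pos hA]
  rfl

section kron
variable {m n : Type*} [Fintype m] [Fintype n] [DecidableEq m] [DecidableEq n]

lemma kron_conjTranspose (A : Matrix m m ℂ) (B : Matrix n n ℂ) :
    (A ⊗ₖ B)ᴴ = Aᴴ ⊗ₖ Bᴴ := by
  ext ⟨a, b⟩ ⟨c, d⟩
  simp [conjTranspose_apply, star_mul', mul_comm]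

lemma kron_unitary {A : Matrix m m ℂ} {B : Matrix n n ℂ}
    (hA : A ∈ Matrix.unitaryGroup m ℂ) (hB : B ∈ Matrix.unitaryGroup n ℂ) :
    A ⊗ₖ B ∈ Matrix.unitaryGroup (m × n) ℂ := by
  have h1 : A * Aᴴ = 1 := Matrix.mem_unitaryGroup_iff.mp hA
  have h2 : B * Bᴴ = 1 := Matrix.mem_unitaryGroup_iff.mp hB
  rw [Matrix.mem_unitaryGroup_iff, star_eq_conjTranspose, kron_conjTranspose,
    ← mul_kronecker_mul, h1, h2, one_kronecker_one]

lemma sum_eig_trace {N : Type*} [Fintype N] [DecidableEq N] {A : Matrix N N ℂ}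
    (hA : A.IsHermitian) : (∑ i, (hA.eigenvalues i : ℂ)) = A.trace := by
  conv_rhs => rw [hA.spectral_theorem]
  rw [Unitary.conjStarAlgAut_apply, Matrix.trace_mul_cycle]
  rw [show star (hA.eigenvectorUnitary : Matrix N N ℂ) * (hA.eigenvectorUnitary : Matrix N N ℂ)
      = 1 from Matrix.mem_unitaryGroup_iff'.mp (hA.eigenvectorUnitary).2]
  rw [one_mul, trace_diagonal]
  rfl

end kron


section Sub
variable {m n : Type*} [Fintype m] [Fintype n] [DecidableEq m] [DecidableEq n]

theorem subadditivity {ρ : Matrix (m × n) (m × n) ℂ} (hρ : ρ.PosSemidef)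
    (htr : ρ.trace = 1) :
    vnEntropy ρ ≤ vnEntropy (ptrace2 ρ) + vnEntropy (ptrace1 ρ) := by
  classical
  have hH : ρ.IsHermitian := hρ.1
  have hA : (ptrace2 ρ).PosSemidef := ptrace2_posSemidef hρ
  have hB : (ptrace1 ρ).PosSemidef := ptrace1_posSemidef hρ
  set p : m × n → ℝ := hH.eigenvalues with hpdef
  set pA : m → ℝ := hA.1.eigenvalues with hpAdef
  set pB : n → ℝ := hB.1.eigenvalues with hpBdef
  set U : Matrix (m × n) (m × n) ℂ := (hH.eigenvectorUnitary : Matrix (m × n) (m × n) ℂ) with hUdef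
  set UA : Matrix m m ℂ := (hA.1.eigenvectorUnitary : Matrix m m ℂ) with hUAdef
  set UB : Matrix n n ℂ := (hB.1.eigenvectorUnitary : Matrix n n ℂ) with hUBdef
  set V : Matrix (m × n) (m × n) ℂ := UA ⊗ₖ UB with hVdef
  have hVmem : V ∈ Matrix.unitaryGroup (m × n) ℂ :=
    kron_unitary (hA.1.eigenvectorUnitary).2 (hB.1.eigenvectorUnitary).2
  set W : Matrix (m × n) (m × n) ℂ := Uᴴ * V with hWdef
  have hWmem : W ∈ Matrix.unitaryGroup (m × n) ℂ := by
    refine mul_mem ?_ hVmem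
    exact Unitary.star_mem (hH.eigenvectorUnitary).2
  set P : (m × n) → (m × n) → ℝ := fun i j => Complex.normSq (W i j) with hPdef
  have hWW : W * Wᴴ = 1 := Matrix.mem_unitaryGroup_iff.mp hWmem
  have hWW' : Wᴴ * W = 1 := Matrix.mem_unitaryGroup_iff'.mp hWmem
  have hstarz : ∀ z : ℂ, star z * z = (Complex.normSq z : ℂ) := by
    intro z; rw [mul_comm]; exact Complex.mul_conj z
  have hrow : ∀ i, ∑ j, P i j = 1 := by
    intro i
    have h := congrFun (congrFun hWW i) i
    rw [mul_apply] at h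
    simp only [one_apply_eq] at h
    have h2 : ∑ j, (P i j : ℂ) = 1 := by
      refine Eq.trans ?_ h
      refine Finset.sum_congr rfl fun j _ => ?_
      rw [conjTranspose_apply, mul_comm, hstarz]
    exact_mod_cast h2
  have hcol : ∀ j, ∑ i, P i j = 1 := by
    intro j
    have h := congrFun (congrFun hWW' j) j
    rw [mul_apply] at h
    simp only [one_apply_eq] at h
    have h2 : ∑ i, (P i j : ℂ) = 1 := by
      refine Eq.trans ?_ h
      refine Finset.sum_congr rfl fun i _ => ?_
      rw [conjTranspose_apply, hstarz]
    exact_mod_cast h2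
  have hp : ∀ i, 0 ≤ p i := fun i => hρ.eigenvalues_nonneg i
  have hpA : ∀ a, 0 ≤ pA a := fun a => hA.eigenvalues_nonneg a
  have hpB : ∀ b, 0 ≤ pB b := fun b => hB.eigenvalues_nonneg b
  have hPnn : ∀ i j, 0 ≤ P i j := fun i j => Complex.normSq_nonneg _
  have hsump : ∑ i, p i = 1 := by
    have h := sum_eig_trace hH
    rw [htr] at h
    exact_mod_cast h
  have hsumpA : ∑ a, pA a = 1 := by
    have h := sum_eig_trace hA.1
    rw [ptrace2_trace, htr] at h
    exact_mod_cast h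
  have hsumpB : ∑ b, pB b = 1 := by
    have h := sum_eig_trace hB.1
    rw [ptrace1_trace, htr] at h
    exact_mod_cast h
  set c : m × n → ℝ := fun j => ∑ i, p i * P i j with hcdef
  set q : m × n → ℝ := fun j => pA j.1 * pB j.2 with hqdef
  have hspec : ρ = U * Matrix.diagonal (fun i => (p i : ℂ)) * Uᴴ := hH.spectral_theorem
  have hC : Vᴴ * ρ * V = Wᴴ * Matrix.diagonal (fun i => (p i : ℂ)) * W := by
    conv_lhs => rw [hspec]
    rw [hWdef, conjTranspose_mul, conjTranspose_conjTranspose]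
    simp only [Matrix.mul_assoc]
  have hCdiag : ∀ j, (Vᴴ * ρ * V) j j = (c j : ℂ) := by
    intro j
    rw [hC, mul_apply]
    have hterm : ∀ i, (Wᴴ * Matrix.diagonal fun i => (p i : ℂ)) j i * W i j
        = ((p i * P i j : ℝ) : ℂ) := by
      intro i
      rw [Matrix.mul_diagonal, conjTranspose_apply]
      push_cast
      rw [mul_comm (star (W i j)) ((p i : ℂ)), mul_assoc, hstarz]
    simp only [hterm]
    rw [hcdef]
    push_cast
    rfl
  have hUBB : UB * UBᴴ = 1 := Matrix.mem_unitaryGroup_iff.mp (hB.1.eigenvectorUnitary).2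
  have hUAA : UA * UAᴴ = 1 := Matrix.mem_unitaryGroup_iff.mp (hA.1.eigenvectorUnitary).2
  have hDA : UAᴴ * ptrace2 ρ * UA = Matrix.diagonal (fun a => (pA a : ℂ)) :=
    (by have h := hA.1.conjStarAlgAut_star_eigenvectorUnitary; rw [Unitary.conjStarAlgAut_apply, Unitary.coe_star, star_star] at h; exact h)
  have hDB : UBᴴ * ptrace1 ρ * UB = Matrix.diagonal (fun b => (pB b : ℂ)) :=
    (by have h := hB.1.conjStarAlgAut_star_eigenvectorUnitary; rw [Unitary.conjStarAlgAut_apply, Unitary.coe_star, star_star] at h; exact h)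
  have hmargA : ∀ a, ∑ b, c (a, b) = pA a := by
    intro a
    have key : ptrace2 (Vᴴ * ρ * V) a a = ((pA a : ℝ) : ℂ) := by
      rw [← trace_single_mul a (ptrace2 (Vᴴ * ρ * V)), ← trace_kron_one]
      have e1 : (Matrix.single a a (1:ℂ) ⊗ₖ (1 : Matrix n n ℂ)) * (Vᴴ * ρ * V)
          = ((Matrix.single a a (1:ℂ) ⊗ₖ (1 : Matrix n n ℂ)) * Vᴴ) * ρ * V := by
        simp only [Matrix.mul_assoc]
      rw [e1, Matrix.trace_mul_cycle]
      have e2 : V * (Matrix.single a a (1:ℂ) ⊗ₖ (1 : Matrix n n ℂ)) * Vᴴ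
          = (UA * Matrix.single a a (1:ℂ) * UAᴴ) ⊗ₖ (1 : Matrix n n ℂ) := by
        rw [hVdef, kron_conjTranspose, ← mul_kronecker_mul,
          ← mul_kronecker_mul, Matrix.mul_one, hUBB]
      rw [← Matrix.mul_assoc V _ Vᴴ, e2, trace_kron_one]
      have e3 : UA * Matrix.single a a (1:ℂ) * UAᴴ * ptrace2 ρ
          = UA * (Matrix.single a a (1:ℂ) * (UAᴴ * ptrace2 ρ)) := by
        simp only [Matrix.mul_assoc]
      rw [e3, Matrix.trace_mul_comm]
      have e4 : Matrix.single a a (1:ℂ) * (UAᴴ * ptrace2 ρ) * UA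
          = Matrix.single a a (1:ℂ) * (UAᴴ * ptrace2 ρ * UA) := by
        simp only [Matrix.mul_assoc]
      rw [e4, hDA, trace_single_mul, Matrix.diagonal_apply_eq]
    have h2 : ∑ b, (c (a, b) : ℂ) = ((pA a : ℝ) : ℂ) := by
      rw [← key]
      exact (Finset.sum_congr rfl fun b _ => (hCdiag (a, b)).symm)
    exact_mod_cast h2
  have hmargB : ∀ b, ∑ a, c (a, b) = pB b := by
    intro b
    have key : ptrace1 (Vᴴ * ρ * V) b b = ((pB b : ℝ) : ℂ) := by
      rw [← trace_single_mul b (ptrace1 (Vᴴ * ρ * V)), ← trace_one_kron]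
      have e1 : (((1 : Matrix m m ℂ)) ⊗ₖ Matrix.single b b (1:ℂ)) * (Vᴴ * ρ * V)
          = ((((1 : Matrix m m ℂ)) ⊗ₖ Matrix.single b b (1:ℂ)) * Vᴴ) * ρ * V := by
        simp only [Matrix.mul_assoc]
      rw [e1, Matrix.trace_mul_cycle]
      have e2 : V * (((1 : Matrix m m ℂ)) ⊗ₖ Matrix.single b b (1:ℂ)) * Vᴴ
          = (1 : Matrix m m ℂ) ⊗ₖ (UB * Matrix.single b b (1:ℂ) * UBᴴ) := by
        rw [hVdef, kron_conjTranspose, ← mul_kronecker_mul,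
          ← mul_kronecker_mul, Matrix.mul_one, hUAA]
      rw [← Matrix.mul_assoc V _ Vᴴ, e2, trace_one_kron]
      have e3 : UB * Matrix.single b b (1:ℂ) * UBᴴ * ptrace1 ρ
          = UB * (Matrix.single b b (1:ℂ) * (UBᴴ * ptrace1 ρ)) := by
        simp only [Matrix.mul_assoc]
      rw [e3, Matrix.trace_mul_comm]
      have e4 : Matrix.single b b (1:ℂ) * (UBᴴ * ptrace1 ρ) * UB
          = Matrix.single b b (1:ℂ) * (UBᴴ * ptrace1 ρ * UB) := by
        simp only [Matrix.mul_assoc]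
      rw [e4, hDB, trace_single_mul, Matrix.diagonal_apply_eq]
    have h2 : ∑ a, (c (a, b) : ℂ) = ((pB b : ℝ) : ℂ) := by
      rw [← key]
      exact (Finset.sum_congr rfl fun a _ => (hCdiag (a, b)).symm)
    exact_mod_cast h2
  have hcnn : ∀ j, 0 ≤ c j := fun j =>
    Finset.sum_nonneg fun i _ => mul_nonneg (hp i) (hPnn i j)
  have hcA0 : ∀ a b, pA a = 0 → c (a, b) = 0 := by
    intro a b h0
    have hle : c (a, b) ≤ ∑ b', c (a, b') :=
      Finset.single_le_sum (fun b' _ => hcnn (a, b')) (Finset.mem_univ b)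
    rw [hmargA a, h0] at hle
    exact le_antisymm hle (hcnn _)
  have hcB0 : ∀ a b, pB b = 0 → c (a, b) = 0 := by
    intro a b h0
    have hle : c (a, b) ≤ ∑ a', c (a', b) :=
      Finset.single_le_sum (fun a' _ => hcnn (a', b)) (Finset.mem_univ a)
    rw [hmargB b, h0] at hle
    exact le_antisymm hle (hcnn _)
  have hq0 : ∀ j, q j = 0 → c j = 0 := by
    intro j h0
    rcases mul_eq_zero.mp h0 with h | h
    · exact hcA0 j.1 j.2 h
    · exact hcB0 j.1 j.2 h
  have hsupp : ∀ i j, q j = 0 → p i * P i j = 0 := by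
    intro i j h0
    have hc0 : c j = 0 := hq0 j h0
    have := (Finset.sum_eq_zero_iff_of_nonneg
      (fun i _ => mul_nonneg (hp i) (hPnn i j))).mp hc0
    exact this i (Finset.mem_univ i)
  have hqnn : ∀ j, 0 ≤ q j := fun j => mul_nonneg (hpA j.1) (hpB j.2)
  have hsumq : ∑ j, q j = 1 := by
    rw [hqdef]
    rw [Fintype.sum_prod_type]
    simp only [← Finset.mul_sum]
    rw [← Finset.sum_mul, hsumpA, hsumpB, one_mul]
  have klein := klein_sum p q P hp hqnn hPnn hrow hcol (by rw [hsumq, hsump]) hsupp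
  have lhs_eq : ∑ i, ∑ j, p i * P i j * Real.log (q j)
      = ∑ j, c j * Real.log (q j) := by
    rw [Finset.sum_comm]
    refine Finset.sum_congr rfl fun j _ => ?_
    rw [hcdef]
    dsimp only
    rw [Finset.sum_mul]
  have split : ∑ j, c j * Real.log (q j) = ∑ a, ent (pA a) + ∑ b, ent (pB b) := by
    rw [Fintype.sum_prod_type]
    have hterm : ∀ a b, c (a, b) * Real.log (q (a, b))
        = c (a, b) * Real.log (pA a) + c (a, b) * Real.log (pB b) := by
      intro a b
      by_cases h1 : pA a = 0
      · rw [hcA0 a b h1]; ring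
      by_cases h2 : pB b = 0
      · rw [hcB0 a b h2]; ring
      have : q (a, b) = pA a * pB b := rfl
      rw [this, Real.log_mul h1 h2]
      ring
    simp only [hterm, Finset.sum_add_distrib]
    congr 1
    · refine Finset.sum_congr rfl fun a _ => ?_
      rw [← Finset.sum_mul, hmargA a]
      rfl
    · rw [Finset.sum_comm]
      refine Finset.sum_congr rfl fun b _ => ?_
      rw [← Finset.sum_mul, hmargB b]
      rfl
  rw [vnEntropy_eq hH, vnEntropy_eq hA.1, vnEntropy_eq hB.1]
  rw [lhs_eq, split] at klein
  linarith

end Sub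

lemma sum_ent_prod {I J : Type*} [Fintype I] [Fintype J] (u : I → ℝ) (v : J → ℝ)
    (hu : ∀ i, 0 ≤ u i) (hv : ∀ j, 0 ≤ v j) (hsu : ∑ i, u i = 1) (hsv : ∑ j, v j = 1) :
    ∑ x : I × J, ent (u x.1 * v x.2) = ∑ i, ent (u i) + ∑ j, ent (v j) := by
  rw [Fintype.sum_prod_type]
  have h : ∀ (i : I) (j : J), ent (u i * v j) = v j * ent (u i) + u i * ent (v j) :=
    fun i j => ent_mul (hu i) (hv j)
  simp only [h, Finset.sum_add_distrib]
  congr 1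
  · refine Finset.sum_congr rfl fun i _ => ?_
    rw [← Finset.sum_mul, hsv, one_mul]
  · simp only [← Finset.mul_sum]
    rw [← Finset.sum_mul, hsu, one_mul]

section Final
variable {dW dS dR : ℕ}

theorem main_ineq
    (ρW : Matrix (Fin dW) (Fin dW) ℂ) (hρWp : ρW.PosSemidef) (hρWtr : ρW.trace = 1)
    (φ : Fin dS → ℂ) (hφ : star φ ⬝ᵥ φ = 1)
    (τ : Matrix (Fin dR) (Fin dR) ℂ) (hτp : τ.PosSemidef) (hτtr : τ.trace = 1)
    (U : Matrix (Fin dW × Fin dS × Fin dR) (Fin dW × Fin dS × Fin dR) ℂ)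
    (hU : U ∈ Matrix.unitaryGroup (Fin dW × Fin dS × Fin dR) ℂ)
    (σ : Matrix (Fin dW × Fin dS × Fin dR) (Fin dW × Fin dS × Fin dR) ℂ)
    (hσ : σ = U * (ρW ⊗ₖ (Matrix.vecMulVec φ (star φ) ⊗ₖ τ)) * Uᴴ) :
    vnEntropy ρW - vnEntropy (ptrace2 σ) - vnEntropy (ptrace2 (ptrace1 σ))
      ≤ vnEntropy (ptrace1 (ptrace1 σ)) - vnEntropy τ := by
  classical
  set Φ : Matrix (Fin dS) (Fin dS) ℂ := Matrix.vecMulVec φ (star φ) with hΦdef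
  have hΦH : Φ.IsHermitian := by
    ext i j
    simp [hΦdef, conjTranspose_apply, vecMulVec_apply, mul_comm]
  have hφ' : ∑ k, star (φ k) * φ k = 1 := hφ
  have hΦidem : Φ * Φ = Φ := by
    ext i j
    rw [mul_apply]
    simp only [hΦdef, vecMulVec_apply, Pi.star_apply]
    have h : ∀ k, φ i * star (φ k) * (φ k * star (φ j))
        = (star (φ k) * φ k) * (φ i * star (φ j)) := fun k => by ring
    simp only [h]
    rw [← Finset.sum_mul, hφ', one_mul]
  have hΦtr : Φ.trace = 1 := by
    rw [← hφ']
    simp only [Matrix.trace, Matrix.diag, hΦdef, vecMulVec_apply, Pi.star_apply]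
    exact Finset.sum_congr rfl fun k _ => mul_comm _ _
  have hΦP : Φ.PosSemidef := by
    refine Matrix.PosSemidef.of_dotProduct_mulVec_nonneg hΦH fun x => ?_
    have e : star x ⬝ᵥ (Φ *ᵥ x) = star (star φ ⬝ᵥ x) * (star φ ⬝ᵥ x) := by
      simp only [dotProduct, mulVec, hΦdef, vecMulVec_apply, Pi.star_apply, star_sum,
        star_mul', star_star, Finset.mul_sum, Finset.sum_mul]
      rw [Finset.sum_comm]
      refine Finset.sum_congr rfl fun i _ => Finset.sum_congr rfl fun j _ => by ring
    rw [e]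
    exact star_mul_self_nonneg _
  -- eigen data
  have hW : ρW.IsHermitian := hρWp.1
  have hR : τ.IsHermitian := hτp.1
  set a : Fin dW → ℝ := hW.eigenvalues with hadef
  set b : Fin dS → ℝ := hΦH.eigenvalues with hbdef
  set cc : Fin dR → ℝ := hR.eigenvalues with hccdef
  set U1 : Matrix (Fin dW) (Fin dW) ℂ := (hW.eigenvectorUnitary : Matrix (Fin dW) (Fin dW) ℂ)
  set U2 : Matrix (Fin dS) (Fin dS) ℂ := (hΦH.eigenvectorUnitary : Matrix (Fin dS) (Fin dS) ℂ)
  set U3 : Matrix (Fin dR) (Fin dR) ℂ := (hR.eigenvectorUnitary : Matrix (Fin dR) (Fin dR) ℂ)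
  have hspecW : ρW = U1 * Matrix.diagonal (fun i => (a i : ℂ)) * U1ᴴ := hW.spectral_theorem
  have hspecS : Φ = U2 * Matrix.diagonal (fun j => (b j : ℂ)) * U2ᴴ := hΦH.spectral_theorem
  have hspecR : τ = U3 * Matrix.diagonal (fun k => (cc k : ℂ)) * U3ᴴ := hR.spectral_theorem
  have ha : ∀ i, 0 ≤ a i := fun i => hρWp.eigenvalues_nonneg i
  have hb : ∀ j, 0 ≤ b j := fun j => hΦP.eigenvalues_nonneg j
  have hc : ∀ k, 0 ≤ cc k := fun k => hτp.eigenvalues_nonneg k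
  have hsuma : ∑ i, a i = 1 := by
    have h := sum_eig_trace hW; rw [hρWtr] at h; exact_mod_cast h
  have hsumb : ∑ j, b j = 1 := by
    have h := sum_eig_trace hΦH; rw [hΦtr] at h; exact_mod_cast h
  have hsumc : ∑ k, cc k = 1 := by
    have h := sum_eig_trace hR; rw [hτtr] at h; exact_mod_cast h
  -- b is idempotent
  have hU2 : U2 * U2ᴴ = 1 := Matrix.mem_unitaryGroup_iff.mp (hΦH.eigenvectorUnitary).2
  have hD2 : U2ᴴ * Φ * U2 = Matrix.diagonal (fun j => (b j : ℂ)) :=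
    (by have h := hΦH.conjStarAlgAut_star_eigenvectorUnitary; rw [Unitary.conjStarAlgAut_apply, Unitary.coe_star, star_star] at h; exact h)
  have habs : ∀ X : Matrix (Fin dS) (Fin dS) ℂ, U2 * (U2ᴴ * X) = X := fun X => by
    rw [← Matrix.mul_assoc, hU2, Matrix.one_mul]
  have hidem : (U2ᴴ * Φ * U2) * (U2ᴴ * Φ * U2) = U2ᴴ * Φ * U2 := by
    simp only [Matrix.mul_assoc]
    rw [habs, ← Matrix.mul_assoc Φ Φ U2, hΦidem]
  rw [hD2, Matrix.diagonal_mul_diagonal] at hidem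
  have hbidem : ∀ j, b j * b j = b j := by
    intro j
    have h := congrFun (congrFun hidem j) j
    rw [Matrix.diagonal_apply_eq, Matrix.diagonal_apply_eq] at h
    exact_mod_cast h
  have hentb : ∀ j, ent (b j) = 0 := by
    intro j
    have h0 : b j * (b j - 1) = 0 := by nlinarith [hbidem j]
    rcases mul_eq_zero.mp h0 with h | h
    rotate_left
    rw [sub_eq_zero] at h
    · simp [ent, h]
    · simp [ent, h]
  -- diagonalize σ
  set V0 : Matrix (Fin dW × Fin dS × Fin dR) (Fin dW × Fin dS × Fin dR) ℂ :=
    U1 ⊗ₖ (U2 ⊗ₖ U3) with hV0def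
  set d : Fin dW × Fin dS × Fin dR → ℝ := fun x => a x.1 * (b x.2.1 * cc x.2.2) with hddef
  have hST : Φ ⊗ₖ τ = (U2 ⊗ₖ U3) *
      Matrix.diagonal (fun y : Fin dS × Fin dR => ((b y.1 : ℂ)) * ((cc y.2 : ℂ))) *
      (U2 ⊗ₖ U3)ᴴ := by
    conv_lhs => rw [hspecS, hspecR]
    rw [mul_kronecker_mul, mul_kronecker_mul, ← kron_conjTranspose,
      Matrix.diagonal_kronecker_diagonal]
  have hρ0 : ρW ⊗ₖ (Φ ⊗ₖ τ) = V0 * Matrix.diagonal (fun x => (d x : ℂ)) * V0ᴴ := by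
    conv_lhs => rw [hspecW, hST]
    rw [mul_kronecker_mul, mul_kronecker_mul, ← kron_conjTranspose,
      Matrix.diagonal_kronecker_diagonal, hV0def]
    have hfun : (fun mn : Fin dW × (Fin dS × Fin dR) =>
        ((a mn.1 : ℂ)) * (((b mn.2.1 : ℂ)) * ((cc mn.2.2 : ℂ))))
        = fun x : Fin dW × (Fin dS × Fin dR) => ((d x : ℝ) : ℂ) := by
      funext x
      rw [hddef]
      push_cast
      rfl
    rw [hfun]
  have hV0mem : V0 ∈ Matrix.unitaryGroup (Fin dW × Fin dS × Fin dR) ℂ :=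
    kron_unitary (hW.eigenvectorUnitary).2
      (kron_unitary (hΦH.eigenvectorUnitary).2 (hR.eigenvectorUnitary).2)
  have hUV0mem : U * V0 ∈ Matrix.unitaryGroup (Fin dW × Fin dS × Fin dR) ℂ := mul_mem hU hV0mem
  have hσdec : σ = (U * V0) * Matrix.diagonal (fun x => (d x : ℂ)) * (U * V0)ᴴ := by
    rw [hσ, hρ0, conjTranspose_mul]
    simp only [Matrix.mul_assoc]
  have hdnn : ∀ x, (0 : ℂ) ≤ (d x : ℂ) := by
    intro x
    have : (0 : ℝ) ≤ d x := mul_nonneg (ha _) (mul_nonneg (hb _) (hc _))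
    exact_mod_cast this
  have hσP : σ.PosSemidef := by
    rw [hσdec]
    exact (Matrix.PosSemidef.diagonal hdnn).mul_mul_conjTranspose_same _
  have hσtr : σ.trace = 1 := by
    rw [hσ, Matrix.trace_mul_cycle,
      show Uᴴ * U = 1 from Matrix.mem_unitaryGroup_iff'.mp hU, Matrix.one_mul,
      Matrix.trace_kronecker, Matrix.trace_kronecker, hρWtr, hΦtr, hτtr]
    simp
  -- entropies
  have hσS : vnEntropy σ = -(∑ i, ent (a i) + ∑ k, ent (cc k)) := by
    rw [vnEntropy_eq hσP.1]
    rw [sum_g_eig hσP.1 hUV0mem d hσdec ent]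
    have e1 : ∑ x : Fin dW × Fin dS × Fin dR, ent (d x)
        = ∑ x : Fin dW × (Fin dS × Fin dR), ent (a x.1 * (b x.2.1 * cc x.2.2)) := rfl
    rw [e1, sum_ent_prod a (fun y : Fin dS × Fin dR => b y.1 * cc y.2) ha
      (fun y => mul_nonneg (hb _) (hc _)) hsuma ?_,
      sum_ent_prod b cc hb hc hsumb hsumc]
    · simp only [hentb, Finset.sum_const_zero, zero_add]
    · rw [Fintype.sum_prod_type]
      simp only [← Finset.mul_sum]
      rw [← Finset.sum_mul, hsumb, hsumc, one_mul]
  have hSW : vnEntropy ρW = -∑ i, ent (a i) := vnEntropy_eq hW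
  have hSR : vnEntropy τ = -∑ k, ent (cc k) := vnEntropy_eq hR
  -- subadditivity twice
  have sub1 := subadditivity hσP hσtr
  have sub2 := subadditivity (ptrace1_posSemidef hσP) (by rw [ptrace1_trace, hσtr])
  rw [hσS] at sub1
  rw [hSW, hSR]
  linarith

end Final

end EntAux

/-- Eq. (55): entropy inequality for reservoir-assisted feedback, from
subadditivity and unitary invariance of the von Neumann entropy. -/
theorem reservoir_feedback_entropy_inequality
    {dW dS dR : ℕ}
    (ρW : Matrix (Fin dW) (Fin dW) ℂ) (hρW : IsDensityMatrix ρW)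
    (φ : Fin dS → ℂ) (hφ : star φ ⬝ᵥ φ = 1)
    (τ : Matrix (Fin dR) (Fin dR) ℂ) (hτ : IsDensityMatrix τ)
    (U : Matrix (Fin dW × Fin dS × Fin dR) (Fin dW × Fin dS × Fin dR) ℂ)
    (hU : U ∈ Matrix.unitaryGroup (Fin dW × Fin dS × Fin dR) ℂ)
    (σ : Matrix (Fin dW × Fin dS × Fin dR) (Fin dW × Fin dS × Fin dR) ℂ)
    (hσ : σ = U * (ρW ⊗ₖ (outer φ ⊗ₖ τ)) * Uᴴ) :
    vnEntropy ρW - vnEntropy (ptrace2 σ) - vnEntropy (ptrace2 (ptrace1 σ))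
      ≤ vnEntropy (ptrace1 (ptrace1 σ)) - vnEntropy τ := by
  exact EntAux.main_ineq ρW hρW.1 hρW.2 φ hφ τ hτ.1 hτ.2 U hU σ hσ
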